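/- Let m, n ≥ 1 be integers and consider the string rewriting system on the alphabet {a, b} with the rules (i) (b a^n)^m (a^n b)^m a → a and (ii) (b a^n)^m (a^n b)^{m−i} a^{n+1} → (a^n b)^{m−i} a^n (a^n b)^m a for 1 ≤ i ≤ m, where one rewriting step replaces an occurrence of a left-hand side as a factor of a word by the corresponding right-hand side. Then: (a) the equivalence relation generated by one-step rewriting coincides with the congruence on {a, b}* generated by the single defining relation (b a^n)^m (a^n b)^m a = a, so the system presents the monoid R_{m,n}; (b) the one-step rewriting relation is terminating (there is no infinite sequence of rewriting steps; equivalently the converse relation is well-founded); (c) the one-step rewriting relation is confluent: whenever a word w rewrites (in zero or more steps) to both w₁ and w₂, there is a word w₃ to which both w₁ and w₂ rewrite in zero or more steps. -/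

import Mathlib

/-- The `i`-fold concatenation of a word with itself. -/
def listPow {σ : Type*} (w : List σ) (i : ℕ) : List σ :=
  (List.replicate i w).flatten

/-- The letter `a`. -/
def aw : List (Fin 2) := [0]

/-- The letter `b`. -/
def bw : List (Fin 2) := [1]

/-- The left-hand side `(b a^n)^m (a^n b)^m a` of rule (i). -/
def lhs₀ (m n : ℕ) : List (Fin 2) :=
  listPow (bw ++ listPow aw n) m ++ listPow (listPow aw n ++ bw) m ++ aw

/-- The left-hand side `(b a^n)^m (a^n b)^{m−i} a^{n+1}` of rule (ii). -/
def lhsᵢ (m n i : ℕ) : List (Fin 2) :=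
  listPow (bw ++ listPow aw n) m ++ listPow (listPow aw n ++ bw) (m - i) ++
    listPow aw (n + 1)

/-- The right-hand side `(a^n b)^{m−i} a^n (a^n b)^m a` of rule (ii). -/
def rhsᵢ (m n i : ℕ) : List (Fin 2) :=
  listPow (listPow aw n ++ bw) (m - i) ++ listPow aw n ++
    listPow (listPow aw n ++ bw) m ++ aw

/-- The rules of the rewriting system: rule (i) `(b a^n)^m (a^n b)^m a → a`, and, for
`1 ≤ i ≤ m`, rule (ii) `(b a^n)^m (a^n b)^{m−i} a^{n+1} → (a^n b)^{m−i} a^n (a^n b)^m a`. -/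
def RewriteRule (m n : ℕ) (l r : List (Fin 2)) : Prop :=
  (l = lhs₀ m n ∧ r = aw) ∨
    ∃ i : ℕ, 1 ≤ i ∧ i ≤ m ∧ l = lhsᵢ m n i ∧ r = rhsᵢ m n i

/-- One-step rewriting: replace an occurrence of a left-hand side as a factor by the
corresponding right-hand side. -/
def RewriteStep (m n : ℕ) (x y : List (Fin 2)) : Prop :=
  ∃ u v l r : List (Fin 2), RewriteRule m n l r ∧ x = u ++ l ++ v ∧ y = u ++ r ++ v

namespace Rmn

theorem listPow_zero {σ : Type*} (w : List σ) : listPow w 0 = [] := rfl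
theorem listPow_succ {σ : Type*} (w : List σ) (k : ℕ) :
    listPow w (k+1) = w ++ listPow w k := by
  simp [listPow, List.replicate_succ]
theorem listPow_add {σ : Type*} (w : List σ) (c d : ℕ) :
    listPow w (c+d) = listPow w c ++ listPow w d := by
  induction c with
  | zero => simp [listPow_zero]
  | succ c ih => rw [Nat.succ_add, listPow_succ, ih, listPow_succ, List.append_assoc]
theorem listPow_one {σ : Type*} (w : List σ) : listPow w 1 = w := by
  simp [listPow]
theorem listPow_comm {σ : Type*} (w : List σ) (c d : ℕ) :
    listPow w c ++ listPow w d = listPow w d ++ listPow w c := by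
  rw [← listPow_add, ← listPow_add, Nat.add_comm]

/-- the a-block `a^n` -/
def Ab (n : ℕ) : List (Fin 2) := List.replicate n 0
/-- `(b a^n)^k` -/
def Rb (n k : ℕ) : List (Fin 2) := listPow (1 :: Ab n) k
/-- `(a^n b)^k` -/
def Qb (n k : ℕ) : List (Fin 2) := listPow (Ab n ++ [1]) k

theorem aw_pow (c : ℕ) : listPow aw c = List.replicate c 0 := by
  induction c with
  | zero => rfl
  | succ c ih => rw [listPow_succ, ih, List.replicate_succ]; rfl

theorem Ab_add (c d : ℕ) : Ab (c + d) = Ab c ++ Ab d := by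
  simp only [Ab, List.replicate_add]

theorem Rb_succ (n k : ℕ) : Rb n (k+1) = 1 :: (Ab n ++ Rb n k) := by
  simp [Rb, listPow_succ]
theorem Qb_succ (n k : ℕ) : Qb n (k+1) = Ab n ++ 1 :: Qb n k := by
  simp [Qb, listPow_succ]
theorem Rb_add (n c d : ℕ) : Rb n (c+d) = Rb n c ++ Rb n d := listPow_add _ c d
theorem Qb_add (n c d : ℕ) : Qb n (c+d) = Qb n c ++ Qb n d := listPow_add _ c d

/-- key commutation: `(a^n b)^k a^n = a^n (b a^n)^k` -/
theorem QA_eq (n k : ℕ) : Qb n k ++ Ab n = Ab n ++ Rb n k := by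
  induction k with
  | zero => show listPow _ 0 ++ Ab n = Ab n ++ listPow _ 0
            rw [listPow_zero, listPow_zero]; simp
  | succ k ih => rw [Qb_succ, Rb_succ]; simp only [List.append_assoc, List.cons_append, ih]

theorem lhs₀_eq (m n : ℕ) : lhs₀ m n = Rb n m ++ Qb n m ++ [0] := by
  rw [lhs₀, aw_pow]; rfl

theorem lhsi_eq (m n i : ℕ) : lhsᵢ m n i = Rb n m ++ Qb n (m-i) ++ List.replicate (n+1) 0 := by
  rw [lhsᵢ, aw_pow, aw_pow]; rfl

theorem rhsi_eq (m n i : ℕ) : rhsᵢ m n i = Qb n (m-i) ++ Ab n ++ Qb n m ++ [0] := by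
  rw [rhsᵢ, aw_pow]; rfl

-- ### termination measure
/-- `phi w` = number of (b,a) inversions: pairs of a `b` before an `a`. -/
def phi : List (Fin 2) → ℕ
  | [] => 0
  | x :: w => (if x = 1 then w.count 0 else 0) + phi w

theorem phi_nil : phi [] = 0 := rfl
theorem phi_cons0 (w : List (Fin 2)) : phi (0 :: w) = phi w := by simp [phi]
theorem phi_cons1 (w : List (Fin 2)) : phi (1 :: w) = w.count 0 + phi w := by simp [phi]

theorem phi_append (u v : List (Fin 2)) :
    phi (u ++ v) = phi u + phi v + (u.count 1) * (v.count 0) := by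
  induction u with
  | nil => simp [phi]
  | cons x u ih =>
    have hc : ∀ y (w : List (Fin 2)), phi (y :: w) = (if y = 1 then w.count 0 else 0) + phi w :=
      fun _ _ => rfl
    by_cases hx : x = 1 <;>
      simp [List.cons_append, hc, hx, ih, List.count_cons, List.count_append] <;> ring

theorem count_listPow (x : Fin 2) (w : List (Fin 2)) (k : ℕ) :
    (listPow w k).count x = k * w.count x := by
  induction k with
  | zero => simp [listPow_zero]
  | succ k ih => rw [listPow_succ, List.count_append, ih]; ring

theorem count0_Ab (n : ℕ) : (Ab n).count 0 = n := by simp [Ab]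
theorem count1_Ab (n : ℕ) : (Ab n).count 1 = 0 := by
  simp [Ab, List.count_replicate]

theorem phi_Ab (n : ℕ) : phi (Ab n) = 0 := by
  induction n with
  | zero => rfl
  | succ n ih =>
    have h : Ab (n+1) = 0 :: Ab n := by simp [Ab, List.replicate_succ]
    rw [h, phi_cons0, ih]

theorem count0_Rb (n k : ℕ) : (Rb n k).count 0 = k * n := by
  simp [Rb, count_listPow, List.count_cons, Ab, List.count_replicate]
theorem count1_Rb (n k : ℕ) : (Rb n k).count 1 = k := by
  simp [Rb, count_listPow, List.count_cons, Ab, List.count_replicate]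
theorem count0_Qb (n k : ℕ) : (Qb n k).count 0 = k * n := by
  simp [Qb, count_listPow, List.count_append, Ab, List.count_replicate]
theorem count1_Qb (n k : ℕ) : (Qb n k).count 1 = k := by
  simp [Qb, count_listPow, List.count_append, Ab, List.count_replicate]

theorem phi_Rb (n k : ℕ) : phi (Rb n k) = phi (Qb n k) + k * n := by
  induction k with
  | zero =>
    show phi (listPow _ 0) = phi (listPow _ 0) + 0 * n
    rw [listPow_zero, listPow_zero]; simp
  | succ k ih =>
    rw [Rb_succ, Qb_succ, phi_cons1, phi_append, phi_append, phi_cons1, phi_Ab, ih,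
      List.count_append, count0_Rb, count0_Qb, count0_Ab, count1_Ab, List.count_cons]
    simp; ring
-- ### decrease of phi under rewriting
theorem phi_rep (k : ℕ) : phi (List.replicate k 0) = 0 := phi_Ab k
theorem count0_rep (k : ℕ) : (List.replicate k (0:Fin 2)).count 0 = k := count0_Ab k
theorem count1_rep (k : ℕ) : (List.replicate k (0:Fin 2)).count 1 = 0 := count1_Ab k
theorem phi_a : phi [(0:Fin 2)] = 0 := rfl
theorem count0_a : List.count (0:Fin 2) [0] = 1 := rfl
theorem count1_a : List.count (1:Fin 2) [0] = 0 := rfl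

theorem phi_lhs0 (m n : ℕ) :
    phi (lhs₀ m n) = 2 * phi (Qb n m) + m * n + m + m * (m * n + 1) := by
  rw [lhs₀_eq, List.append_assoc]
  simp only [phi_append, phi_Rb, phi_a, List.count_append, count0_Qb, count1_Qb,
    count0_Rb, count1_Rb, count0_a, count1_a]
  ring

theorem phi_lhsi (m n i : ℕ) :
    phi (lhsᵢ m n i) =
      phi (Rb n m) + phi (Qb n (m-i)) + (m-i) * (n+1) + m * ((m-i) * n + (n+1)) := by
  rw [lhsi_eq, List.append_assoc]
  simp only [phi_append, phi_rep, List.count_append, count0_Qb, count1_Qb,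
    count0_Rb, count1_Rb, count0_rep, count1_rep]
  ring

theorem phi_rhsi (m n i : ℕ) :
    phi (rhsᵢ m n i) =
      phi (Qb n (m-i)) + phi (Qb n m) + m + (m-i) * (n + m * n + 1) := by
  rw [rhsi_eq, List.append_assoc, List.append_assoc]
  simp only [phi_append, phi_Ab, phi_a, List.count_append, count0_Qb, count1_Qb,
    count0_Ab, count1_Ab, count0_a, count1_a]
  ring

theorem rule_phi_lt {m n : ℕ} (hm : 1 ≤ m) (hn : 1 ≤ n) {l r : List (Fin 2)}
    (h : RewriteRule m n l r) :
    phi r < phi l ∧ r.count 0 ≤ l.count 0 ∧ r.count 1 ≤ l.count 1 := by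
  rcases h with ⟨rfl, rfl⟩ | ⟨i, hi1, him, rfl, rfl⟩
  · refine ⟨?_, ?_, ?_⟩
    · have h0 : phi aw = 0 := rfl
      rw [h0, phi_lhs0]
      have : 1 ≤ m * (m*n+1) := Nat.one_le_iff_ne_zero.mpr (by positivity)
      omega
    · have h0 : (aw).count 0 = 1 := rfl
      rw [h0, lhs₀_eq]
      simp only [List.count_append, count0_Rb, count0_Qb, count0_a]
      omega
    · have h0 : (aw).count 1 = 0 := rfl
      rw [h0]; exact Nat.zero_le _
  · refine ⟨?_, le_of_eq ?_, le_of_eq ?_⟩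
    · rw [phi_lhsi, phi_rhsi, phi_Rb]
      nlinarith [Nat.one_le_iff_ne_zero.mp hm, Nat.mul_le_mul hm hn]
    · rw [lhsi_eq, rhsi_eq]
      simp only [List.count_append, count0_Rb, count0_Qb, count0_Ab, count0_rep, count0_a]
      ring
    · rw [lhsi_eq, rhsi_eq]
      simp only [List.count_append, count1_Rb, count1_Qb, count1_Ab, count1_rep, count1_a]
      ring

theorem step_phi_lt {m n : ℕ} (hm : 1 ≤ m) (hn : 1 ≤ n) {x y : List (Fin 2)}
    (h : RewriteStep m n x y) : phi y < phi x := by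
  obtain ⟨u, v, l, r, hrule, rfl, rfl⟩ := h
  obtain ⟨h1, h2, h3⟩ := rule_phi_lt hm hn hrule
  simp only [phi_append, List.count_append]
  nlinarith [Nat.mul_le_mul h3 (le_refl (v.count 0)),
    Nat.mul_le_mul (le_refl (u.count 1)) (Nat.add_le_add h2 (le_refl (v.count 0)))]

theorem rmn_terminating (m n : ℕ) (hm : 1 ≤ m) (hn : 1 ≤ n) :
    WellFounded (fun x y : List (Fin 2) => RewriteStep m n y x) :=
  Subrelation.wf (fun h => step_phi_lt hm hn h) (measure phi).wf
-- ### splitting lemmas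
theorem Ab_def (n : ℕ) : Ab n = List.replicate n 0 := rfl
theorem Rb_nil (n : ℕ) : Rb n 0 = [] := rfl
theorem Qb_nil (n : ℕ) : Qb n 0 = [] := rfl

theorem L1 {c : ℕ} {z s t : List (Fin 2)}
    (h : Ab c ++ z = s ++ 1 :: t) :
    ∃ s', s = Ab c ++ s' ∧ z = s' ++ 1 :: t := by
  induction c generalizing s with
  | zero => exact ⟨s, by simp [Ab_def], by simpa [Ab_def] using h⟩
  | succ c ih =>
    rw [Ab_def, List.replicate_succ, List.cons_append] at h
    cases s with
    | nil => simp at h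
    | cons x s' =>
      rw [List.cons_append] at h
      injection h with h1 h2
      rw [← Ab_def] at h2
      obtain ⟨s'', hs, hz⟩ := ih h2
      refine ⟨s'', ?_, hz⟩
      rw [Ab_def, List.replicate_succ, hs, ← h1, List.cons_append, Ab_def]

theorem rep_split {c : ℕ} {s t : List (Fin 2)}
    (h : Ab c = s ++ 1 :: t) : False := by
  have h' : Ab c ++ [] = s ++ 1 :: t := by simpa using h
  obtain ⟨s', -, hz⟩ := L1 h'
  simp at hz

theorem Rb_split {n k : ℕ} {z s t : List (Fin 2)}
    (h : Rb n k ++ z = s ++ 1 :: t) :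
    (∃ j k', k = j + k' + 1 ∧ s = Rb n j ∧ t = Ab n ++ (Rb n k' ++ z)) ∨
      (∃ s', s = Rb n k ++ s' ∧ z = s' ++ 1 :: t) := by
  induction k generalizing s with
  | zero =>
    rw [Rb_nil, List.nil_append] at h
    exact Or.inr ⟨s, by rw [Rb_nil, List.nil_append], h⟩
  | succ k ih =>
    rw [Rb_succ, List.cons_append, List.append_assoc] at h
    cases s with
    | nil =>
      injection h with h1 h2
      exact Or.inl ⟨0, k, by omega, (Rb_nil n).symm, h2.symm⟩
    | cons x s' =>
      rw [List.cons_append] at h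
      injection h with h1 h2
      obtain ⟨s'', hs, hz⟩ := L1 h2
      rcases ih hz with ⟨j, k', hk, hsj, ht⟩ | ⟨s₃, hs₃, hz₃⟩
      · exact Or.inl ⟨j+1, k', by omega, by rw [Rb_succ, ← h1, hs, hsj], ht⟩
      · exact Or.inr ⟨s₃, by
          rw [Rb_succ, ← h1, hs, hs₃, List.cons_append, List.append_assoc], hz₃⟩

theorem Qb_split {n k : ℕ} {z s t : List (Fin 2)}
    (h : Qb n k ++ z = s ++ 1 :: t) :
    (∃ j k', k = j + k' + 1 ∧ s = Qb n j ++ Ab n ∧ t = Qb n k' ++ z) ∨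
      (∃ s', s = Qb n k ++ s' ∧ z = s' ++ 1 :: t) := by
  induction k generalizing s with
  | zero =>
    rw [Qb_nil, List.nil_append] at h
    exact Or.inr ⟨s, by rw [Qb_nil, List.nil_append], h⟩
  | succ k ih =>
    rw [Qb_succ, List.append_assoc, List.cons_append] at h
    obtain ⟨s', hs, hrest⟩ := L1 h
    cases s' with
    | nil =>
      injection hrest with h1 h2
      exact Or.inl ⟨0, k, by omega, by rw [hs, Qb_nil, List.nil_append, List.append_nil], h2.symm⟩
    | cons x s'' =>
      rw [List.cons_append] at hrest
      injection hrest with h1 h2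
      rcases ih h2 with ⟨j, k', hk, hsj, ht⟩ | ⟨s₃, hs₃, hz₃⟩
      · refine Or.inl ⟨j+1, k', by omega, ?_, ht⟩
        rw [hs, hsj, ← h1, Qb_succ, List.append_assoc, List.cons_append]
      · refine Or.inr ⟨s₃, ?_, hz₃⟩
        rw [hs, hs₃, ← h1, Qb_succ, List.append_assoc, List.cons_append]

theorem comp_head {x y : Fin 2} {p q : List (Fin 2)}
    (h : x :: p <+: y :: q ∨ y :: q <+: x :: p) : x = y := by
  rcases h with h | h
  · exact (List.cons_prefix_cons.mp h).1
  · exact ((List.cons_prefix_cons.mp h).1).symm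

theorem comp_cancel {X p q : List (Fin 2)}
    (h : X ++ p <+: X ++ q ∨ X ++ q <+: X ++ p) : p <+: q ∨ q <+: p := by
  rcases h with h | h
  · exact Or.inl ((List.prefix_append_right_inj X).mp h)
  · exact Or.inr ((List.prefix_append_right_inj X).mp h)
-- ### shape and classification lemmas
theorem rep_eq_Ab (n : ℕ) : List.replicate (n+1) (0:Fin 2) = Ab n ++ [0] := by
  rw [← Ab_def, Ab_add]; rfl

theorem rep_cons (n : ℕ) : List.replicate (n+1) (0:Fin 2) = 0 :: List.replicate n 0 :=
  List.replicate_succ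

theorem head0 {n : ℕ} (hn : 1 ≤ n) (d : ℕ) {w : List (Fin 2)} (hw : ∃ y, w = 0 :: y) :
    ∃ y, Qb n d ++ w = 0 :: y := by
  cases d with
  | zero => obtain ⟨y, rfl⟩ := hw; exact ⟨y, by rw [Qb_nil, List.nil_append]⟩
  | succ d =>
    obtain ⟨n', rfl⟩ : ∃ n', n = n' + 1 := ⟨n - 1, by omega⟩
    refine ⟨List.replicate n' 0 ++ 1 :: Qb (n'+1) d ++ w, ?_⟩
    rw [Qb_succ, Ab_def, rep_cons]
    simp [List.append_assoc]

theorem rule_shape {m n : ℕ} (hn : 1 ≤ n) {l r : List (Fin 2)}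
    (h : RewriteRule m n l r) :
    ∃ S, l = Rb n m ++ S ∧ ∃ y, S = 0 :: y := by
  rcases h with ⟨rfl, -⟩ | ⟨i, -, -, rfl, -⟩
  · exact ⟨Qb n m ++ [0], by rw [lhs₀_eq, List.append_assoc], head0 hn m ⟨[], rfl⟩⟩
  · exact ⟨Qb n (m-i) ++ List.replicate (n+1) 0, by rw [lhsi_eq, List.append_assoc],
      head0 hn (m-i) ⟨List.replicate n 0, rep_cons n⟩⟩

theorem not_comp_rep_Q {n e : ℕ} (hn : 1 ≤ n) (he : 1 ≤ e) (x y : List (Fin 2)) :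
    ¬ (List.replicate (n+1) 0 ++ x <+: Qb n e ++ y ∨
        Qb n e ++ y <+: List.replicate (n+1) 0 ++ x) := by
  intro h
  obtain ⟨e', rfl⟩ : ∃ e', e = e' + 1 := ⟨e - 1, by omega⟩
  rw [Qb_succ, rep_eq_Ab] at h
  rw [List.append_assoc, List.append_assoc] at h
  have h2 := comp_cancel h
  rw [List.cons_append] at h2
  exact absurd (comp_head h2) (by decide)

theorem same_pos {m n : ℕ} (hm : 1 ≤ m) (hn : 1 ≤ n) {l₁ r₁ l₂ r₂ : List (Fin 2)}
    (h₁ : RewriteRule m n l₁ r₁) (h₂ : RewriteRule m n l₂ r₂)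
    (hc : l₁ <+: l₂ ∨ l₂ <+: l₁) : l₁ = l₂ ∧ r₁ = r₂ := by
  have key : ∀ d₁ d₂ x y, d₁ < d₂ → d₂ ≤ m →
      ¬ (Qb n d₂ ++ x <+: Qb n d₁ ++ (List.replicate (n+1) 0 ++ y) ∨
          Qb n d₁ ++ (List.replicate (n+1) 0 ++ y) <+: Qb n d₂ ++ x) := by
    intro d₁ d₂ x y hlt hle h
    have : Qb n d₂ ++ x = Qb n d₁ ++ (Qb n (d₂ - d₁) ++ x) := by
      rw [← List.append_assoc, ← Qb_add]
      congr 2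
      omega
    rw [this] at h
    exact not_comp_rep_Q hn (by omega) y x (comp_cancel h).symm
  rcases h₁ with ⟨rfl, rfl⟩ | ⟨i, hi1, him, rfl, rfl⟩ <;>
    rcases h₂ with ⟨rfl, rfl⟩ | ⟨i', hi1', him', rfl, rfl⟩
  · exact ⟨rfl, rfl⟩
  · exfalso
    rw [lhs₀_eq, lhsi_eq, List.append_assoc, List.append_assoc] at hc
    have h2 := comp_cancel hc
    have h3 : Qb n m ++ [0] = Qb n (m-i') ++ (Qb n i' ++ [0]) := by
      rw [← List.append_assoc, ← Qb_add]
      congr 2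
      omega
    rw [h3] at h2
    exact not_comp_rep_Q hn hi1' [] [0] (by
      simpa using (comp_cancel h2).symm)
  · exfalso
    rw [lhs₀_eq, lhsi_eq, List.append_assoc, List.append_assoc] at hc
    have h2 := (comp_cancel hc).symm
    have h3 : Qb n m ++ [0] = Qb n (m-i) ++ (Qb n i ++ [0]) := by
      rw [← List.append_assoc, ← Qb_add]
      congr 2
      omega
    rw [h3] at h2
    exact not_comp_rep_Q hn hi1 [] [0] (by
      simpa using (comp_cancel h2).symm)
  · rcases Nat.lt_trichotomy (m - i) (m - i') with hlt | heq | hlt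
    · exfalso
      rw [lhsi_eq, lhsi_eq, List.append_assoc, List.append_assoc] at hc
      have h2 := comp_cancel hc
      exact key (m-i) (m-i') (List.replicate (n+1) 0) [] hlt (by omega)
        (by simpa using h2.symm)
    · have : i = i' := by omega
      subst this
      exact ⟨rfl, rfl⟩
    · exfalso
      rw [lhsi_eq, lhsi_eq, List.append_assoc, List.append_assoc] at hc
      have h2 := comp_cancel hc
      exact key (m-i') (m-i) (List.replicate (n+1) 0) [] hlt (by omega)
        (by simpa using h2)
-- ### overlap classification
theorem overlap_classify {m n : ℕ} (hm : 1 ≤ m) (hn : 1 ≤ n)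
    {l₁ r₁ l₂ r₂ s t : List (Fin 2)}
    (h₁ : RewriteRule m n l₁ r₁) (h₂ : RewriteRule m n l₂ r₂)
    (hsplit : l₁ = s ++ t) (hs : s ≠ []) (ht : t ≠ [])
    (hcomp : t <+: l₂ ∨ l₂ <+: t) :
    ∃ j k', m = j + k' + 1 ∧ r₁ = [0] ∧
      s = Rb n m ++ (Qb n j ++ Ab n) ∧ t = 1 :: (Qb n k' ++ [0]) := by
  -- l₂ starts with 1
  obtain ⟨S₂, hl₂, y₂, hS₂⟩ := rule_shape hn h₂
  obtain ⟨m', rfl⟩ : ∃ m', m = m' + 1 := ⟨m - 1, by omega⟩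
  have hl₂' : l₂ = 1 :: (Ab n ++ Rb n m' ++ S₂) := by
    rw [hl₂, Rb_succ, List.cons_append, List.append_assoc]
  -- t starts with 1
  obtain ⟨x, t', rfl⟩ : ∃ x t', t = x :: t' := by
    cases t with
    | nil => exact absurd rfl ht
    | cons a b => exact ⟨a, b, rfl⟩
  have hx : x = 1 := by
    rw [hl₂'] at hcomp
    exact comp_head hcomp
  subst hx
  -- generic contradiction: t = Rb n (c+1) ++ X with X starting with 0, against l₂
  have contra : ∀ c X, c + 1 ≤ m' → (∃ y, X = 0 :: y) →
      (1 :: t' <+: l₂ ∨ l₂ <+: 1 :: t') → 1 :: t' = Rb n (c+1) ++ X → False := by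
    intro c X hc hX hcmp ht'
    rw [ht'] at hcmp
    have hl₂'' : l₂ = Rb n (c+1) ++ (Rb n (m' - c) ++ S₂) := by
      rw [hl₂, ← List.append_assoc, ← Rb_add]
      congr 2
      omega
    rw [hl₂''] at hcmp
    have h2 := comp_cancel hcmp
    obtain ⟨y, rfl⟩ := hX
    obtain ⟨e, he⟩ : ∃ e, m' - c = e + 1 := ⟨m' - c - 1, by omega⟩
    rw [he, Rb_succ, List.cons_append] at h2
    exact absurd (comp_head h2) (by decide)
  rcases h₁ with ⟨rfl, rfl⟩ | ⟨i, hi1, him, rfl, rfl⟩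
  · -- l₁ = lhs₀
    have h : Rb n (m'+1) ++ (Qb n (m'+1) ++ [0]) = s ++ 1 :: t' := by
      rw [← List.append_assoc, ← lhs₀_eq, hsplit]
    rcases Rb_split h with ⟨j, k', hk, hsj, ht'eq⟩ | ⟨s', hs', hrest⟩
    · -- split inside the R-block: impossible
      exfalso
      obtain ⟨j', rfl⟩ : ∃ j', j = j' + 1 := by
        cases j with
        | zero => rw [hsj, Rb_nil] at hs; exact absurd rfl hs
        | succ j' => exact ⟨j', rfl⟩
      refine contra k' (Qb n (m'+1) ++ [0]) (by omega) (head0 hn _ ⟨[], rfl⟩) hcomp ?_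
      rw [ht'eq, Rb_succ, List.cons_append, List.append_assoc]
    · rcases Qb_split hrest with ⟨j, k', hk, hsj, ht'eq⟩ | ⟨s'', hs'', hrest'⟩
      · exact ⟨j, k', by omega, rfl, by rw [hs', hsj], by rw [ht'eq]⟩
      · exfalso
        rcases s'' with _ | ⟨a, s₃⟩ <;> simp at hrest'
  · -- l₁ = lhsᵢ
    exfalso
    have h : Rb n (m'+1) ++ (Qb n (m'+1-i) ++ List.replicate (n+1) 0) = s ++ 1 :: t' := by
      rw [← List.append_assoc, ← lhsi_eq, hsplit]
    rcases Rb_split h with ⟨j, k', hk, hsj, ht'eq⟩ | ⟨s', hs', hrest⟩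
    · obtain ⟨j', rfl⟩ : ∃ j', j = j' + 1 := by
        cases j with
        | zero => rw [hsj, Rb_nil] at hs; exact absurd rfl hs
        | succ j' => exact ⟨j', rfl⟩
      refine contra k' (Qb n (m'+1-i) ++ List.replicate (n+1) 0) (by omega)
        (head0 hn _ ⟨List.replicate n 0, rep_cons n⟩) hcomp ?_
      rw [ht'eq, Rb_succ, List.cons_append, List.append_assoc]
    · rcases Qb_split hrest with ⟨j, k', hk, hsj, ht'eq⟩ | ⟨s'', hs'', hrest'⟩
      · -- t = 1 :: Qb n k' ++ rep(n+1) = Rb n (k'+1) ++ [0] : contradiction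
        refine contra k' [0] (by omega) ⟨[], rfl⟩ hcomp ?_
        rw [ht'eq, rep_eq_Ab, ← List.append_assoc, QA_eq, Rb_succ]
        simp [List.append_assoc]
      · exact rep_split hrest'
-- ### step builders and oriented identities
theorem mk_step {m n : ℕ} {x y u v l r : List (Fin 2)} (h : RewriteRule m n l r)
    (hx : x = u ++ (l ++ v)) (hy : y = u ++ (r ++ v)) : RewriteStep m n x y :=
  ⟨u, v, l, r, h, hx.trans (List.append_assoc u l v).symm,
    hy.trans (List.append_assoc u r v).symm⟩

theorem rule0 (m n : ℕ) : RewriteRule m n (lhs₀ m n) aw := Or.inl ⟨rfl, rfl⟩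
theorem rulei (m n : ℕ) {i : ℕ} (hi1 : 1 ≤ i) (him : i ≤ m) :
    RewriteRule m n (lhsᵢ m n i) (rhsᵢ m n i) := Or.inr ⟨i, hi1, him, rfl, rfl⟩

theorem aw_eq : aw = [0] := rfl

theorem QA' (n k : ℕ) (z : List (Fin 2)) :
    Qb n k ++ (Ab n ++ z) = Ab n ++ (Rb n k ++ z) := by
  rw [← List.append_assoc, QA_eq, List.append_assoc]

theorem RR' (n c d : ℕ) (z : List (Fin 2)) :
    Rb n c ++ (Rb n d ++ z) = Rb n d ++ (Rb n c ++ z) := by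
  rw [← List.append_assoc, ← Rb_add, Nat.add_comm c d, Rb_add, List.append_assoc]

theorem AbSplit (n' : ℕ) (z : List (Fin 2)) :
    Ab (n'+1) ++ (Ab (n'+1) ++ z) = Ab (n'+1+1) ++ (Ab n' ++ z) := by
  rw [← List.append_assoc, ← Ab_add, ← List.append_assoc, ← Ab_add]
  congr 2
  omega

theorem repN_Ab (n : ℕ) : List.replicate (n+1) (0:Fin 2) = Ab (n+1) := rfl

theorem AbN1c (c : ℕ) (z : List (Fin 2)) : Ab (c+1) ++ z = Ab c ++ (0 :: z) := by
  rw [Ab_add, List.append_assoc]; rfl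

theorem ZAc (n' j : ℕ) (z : List (Fin 2)) :
    (0 : Fin 2) :: (Ab n' ++ (Rb (n'+1) j ++ z)) = Qb (n'+1) j ++ (Ab (n'+1) ++ z) := by
  rw [QA']; rfl

theorem QA0c (n' k : ℕ) (z : List (Fin 2)) :
    Qb (n'+1) k ++ ((0 : Fin 2) :: (Ab n' ++ z)) = Ab (n'+1) ++ (Rb (n'+1) k ++ z) := by
  have h : (0 : Fin 2) :: (Ab n' ++ z) = Ab (n'+1) ++ z := rfl
  rw [h, QA']

theorem Tgluec {n' j k' m : ℕ} (hmjk : m = j + k' + 1) (X : List (Fin 2)) :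
    (1 : Fin 2) :: (Qb (n'+1) k' ++ ((0:Fin 2) :: (Ab n' ++ (Rb (n'+1) j ++ X)))) =
      Rb (n'+1) m ++ X := by
  rw [QA0c]
  have h2 : m = (k'+1) + j := by omega
  rw [h2, Rb_add, Rb_succ]
  simp [List.append_assoc]

theorem QAN1 (n' d : ℕ) (z : List (Fin 2)) :
    Qb (n'+1) d ++ (Ab (n'+1+1) ++ z) = Ab (n'+1) ++ (Rb (n'+1) d ++ ((0:Fin 2) :: z)) := by
  rw [AbN1c, QA']

theorem QAA (n' d : ℕ) (z : List (Fin 2)) :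
    Ab (n'+1) ++ (Qb (n'+1) d ++ (Ab (n'+1) ++ z)) =
      Ab (n'+1+1) ++ (Ab n' ++ (Rb (n'+1) d ++ z)) := by
  rw [QA', AbSplit]
-- ### local confluence
theorem locAux {m n : ℕ} (hm : 1 ≤ m) (hn : 1 ≤ n)
    {u₁ l₁ r₁ v₁ u₂ l₂ r₂ v₂ : List (Fin 2)}
    (h₁ : RewriteRule m n l₁ r₁) (h₂ : RewriteRule m n l₂ r₂)
    (heq : u₁ ++ (l₁ ++ v₁) = u₂ ++ (l₂ ++ v₂)) (hle : u₁.length ≤ u₂.length) :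
    ∃ z, Relation.ReflTransGen (RewriteStep m n) (u₁ ++ (r₁ ++ v₁)) z ∧
      Relation.ReflTransGen (RewriteStep m n) (u₂ ++ (r₂ ++ v₂)) z := by
  obtain ⟨s, rfl⟩ : u₁ <+: u₂ :=
    List.prefix_of_prefix_length_le ⟨l₁ ++ v₁, heq⟩ ⟨l₂ ++ v₂, rfl⟩ hle
  have heq' : l₁ ++ v₁ = s ++ (l₂ ++ v₂) :=
    List.append_cancel_left (by rw [heq, List.append_assoc])
  by_cases hcase : l₁.length ≤ s.length
  · -- disjoint redexes
    obtain ⟨z, rfl⟩ : l₁ <+: s :=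
      List.prefix_of_prefix_length_le ⟨v₁, heq'⟩ ⟨l₂ ++ v₂, rfl⟩ hcase
    have hv₁ : v₁ = z ++ (l₂ ++ v₂) :=
      List.append_cancel_left (by rw [heq', List.append_assoc])
    refine ⟨u₁ ++ (r₁ ++ (z ++ (r₂ ++ v₂))),
      Relation.ReflTransGen.single
        (mk_step h₂ (u := u₁ ++ (r₁ ++ z)) (v := v₂) ?_ ?_),
      Relation.ReflTransGen.single
        (mk_step h₁ (u := u₁) (v := z ++ (r₂ ++ v₂)) ?_ ?_)⟩
    · rw [hv₁]; simp [List.append_assoc]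
    · simp [List.append_assoc]
    · simp [List.append_assoc]
    · simp [List.append_assoc]
  · push_neg at hcase
    obtain ⟨t, rfl⟩ : s <+: l₁ :=
      List.prefix_of_prefix_length_le ⟨l₂ ++ v₂, heq'.symm⟩ ⟨v₁, rfl⟩ (le_of_lt hcase)
    have hv : t ++ v₁ = l₂ ++ v₂ :=
      List.append_cancel_left (by rw [← heq', List.append_assoc])
    have ht : t ≠ [] := by
      intro h
      rw [h] at hcase
      simp at hcase
    have hcomp : t <+: l₂ ∨ l₂ <+: t :=
      List.prefix_or_prefix_of_prefix ⟨v₁, hv⟩ ⟨v₂, rfl⟩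
    by_cases hsnil : s = []
    · -- same position
      subst hsnil
      obtain ⟨hl, hr⟩ := same_pos hm hn (show RewriteRule m n t r₁ by simpa using h₁) h₂ hcomp
      have hv' : v₁ = v₂ := by
        apply List.append_cancel_left (as := t)
        rw [hv, hl]
      refine ⟨u₁ ++ (r₁ ++ v₁), Relation.ReflTransGen.refl, ?_⟩
      have hEq : u₁ ++ [] ++ (r₂ ++ v₂) = u₁ ++ (r₁ ++ v₁) := by
        rw [hr, hv']; simp
      rw [hEq]
    · -- genuine overlap
      obtain ⟨j, k', hmjk, hr₁, hs_eq, ht_eq⟩ :=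
        overlap_classify hm hn h₁ h₂ rfl hsnil ht hcomp
      obtain ⟨n', rfl⟩ : ∃ n', n = n' + 1 := ⟨n - 1, by omega⟩
      rcases h₂ with ⟨rfl, rfl⟩ | ⟨i₂, hi₂1, hi₂m, rfl, rfl⟩
      · -- second rule is rule 0 : one-step join
        have hl₂t : lhs₀ m (n'+1) =
            t ++ (Ab n' ++ (Rb (n'+1) j ++ (Qb (n'+1) m ++ [0]))) := by
          rw [ht_eq, lhs₀_eq]
          simp only [List.cons_append, List.nil_append, List.append_assoc]
          rw [Tgluec hmjk]
        have hv₁ : v₁ = (Ab n' ++ (Rb (n'+1) j ++ (Qb (n'+1) m ++ [0]))) ++ v₂ := by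
          apply List.append_cancel_left (as := t)
          rw [hv, hl₂t, List.append_assoc]
        refine ⟨u₁ ++ (r₁ ++ v₁), Relation.ReflTransGen.refl,
          Relation.ReflTransGen.single
            (mk_step (rulei m (n'+1) (i := k'+1) (by omega) (by omega))
              (u := u₁) (v := v₂) ?_ ?_)⟩
        · rw [aw_eq, hs_eq, lhsi_eq]
          have hj : m - (k'+1) = j := by omega
          rw [hj, repN_Ab]
          simp only [List.cons_append, List.nil_append, List.append_assoc]
          simp only [AbN1c]
        · rw [hr₁, hv₁, rhsi_eq]
          have hj : m - (k'+1) = j := by omega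
          rw [hj]
          simp only [List.cons_append, List.nil_append, List.append_assoc]
          rw [ZAc]
      · -- second rule is rule i₂ : two-step join
        have hl₂t : lhsᵢ m (n'+1) i₂ =
            t ++ (Ab n' ++ (Rb (n'+1) j ++ (Qb (n'+1) (m-i₂) ++ Ab (n'+1+1)))) := by
          rw [ht_eq, lhsi_eq, repN_Ab]
          simp only [List.cons_append, List.nil_append, List.append_assoc]
          rw [Tgluec hmjk]
        have hv₁ : v₁ =
            (Ab n' ++ (Rb (n'+1) j ++ (Qb (n'+1) (m-i₂) ++ Ab (n'+1+1)))) ++ v₂ := by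
          apply List.append_cancel_left (as := t)
          rw [hv, hl₂t, List.append_assoc]
        refine ⟨u₁ ++ (Qb (n'+1) j ++ (Ab (n'+1) ++ (Ab (n'+1) ++
            (Rb (n'+1) (m-i₂) ++ ((0:Fin 2) :: v₂))))), ?_, ?_⟩
        · -- w₁ is equal to the reduct
          have hEq : u₁ ++ (r₁ ++ v₁) = u₁ ++ (Qb (n'+1) j ++ (Ab (n'+1) ++ (Ab (n'+1) ++
              (Rb (n'+1) (m-i₂) ++ ((0:Fin 2) :: v₂))))) := by
            rw [hr₁, hv₁]
            simp only [List.cons_append, List.nil_append, List.append_assoc]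
            rw [ZAc, QAN1]
          rw [hEq]
        · -- two rewrite steps
          have hstep1 : RewriteStep m (n'+1) ((u₁ ++ s) ++ (rhsᵢ m (n'+1) i₂ ++ v₂))
              (u₁ ++ (rhsᵢ m (n'+1) (k'+1) ++ (Ab n' ++ (Rb (n'+1) (m-i₂) ++
                (Qb (n'+1) m ++ ((0:Fin 2) :: v₂)))))) := by
            refine mk_step (rulei m (n'+1) (i := k'+1) (by omega) (by omega))
              (u := u₁)
              (v := Ab n' ++ (Rb (n'+1) (m-i₂) ++ (Qb (n'+1) m ++ ((0:Fin 2) :: v₂)))) ?_ rfl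
            rw [hs_eq, rhsi_eq, lhsi_eq]
            have hj : m - (k'+1) = j := by omega
            rw [hj, repN_Ab]
            simp only [List.cons_append, List.nil_append, List.append_assoc]
            rw [QAA]
          have hstep2 : RewriteStep m (n'+1)
              (u₁ ++ (rhsᵢ m (n'+1) (k'+1) ++ (Ab n' ++ (Rb (n'+1) (m-i₂) ++
                (Qb (n'+1) m ++ ((0:Fin 2) :: v₂))))))
              (u₁ ++ (Qb (n'+1) j ++ (Ab (n'+1) ++ (Ab (n'+1) ++
                (Rb (n'+1) (m-i₂) ++ ((0:Fin 2) :: v₂)))))) := by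
            refine mk_step (rule0 m (n'+1))
              (u := u₁ ++ (Qb (n'+1) j ++ (Ab (n'+1) ++ (Ab (n'+1) ++ Rb (n'+1) (m-i₂)))))
              (v := v₂) ?_ ?_
            · rw [rhsi_eq, lhs₀_eq]
              have hj : m - (k'+1) = j := by omega
              rw [hj]
              simp only [List.cons_append, List.nil_append, List.append_assoc]
              rw [QA0c, RR']
            · rw [aw_eq]
              simp [List.append_assoc]
          exact Relation.ReflTransGen.head hstep1 (Relation.ReflTransGen.single hstep2)
-- ### part (a) : presentation
theorem QQ' (n c d : ℕ) (z : List (Fin 2)) :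
    Qb n c ++ (Qb n d ++ z) = Qb n d ++ (Qb n c ++ z) := by
  rw [← List.append_assoc, ← Qb_add, Nat.add_comm c d, Qb_add, List.append_assoc]

theorem step_append_right {m n : ℕ} {x x' : List (Fin 2)} (y : List (Fin 2))
    (h : RewriteStep m n x x') : RewriteStep m n (x ++ y) (x' ++ y) := by
  obtain ⟨u, v, l, r, hr, rfl, rfl⟩ := h
  exact ⟨u, v ++ y, l, r, hr, by simp [List.append_assoc], by simp [List.append_assoc]⟩

theorem step_append_left {m n : ℕ} (x : List (Fin 2)) {y y' : List (Fin 2)}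
    (h : RewriteStep m n y y') : RewriteStep m n (x ++ y) (x ++ y') := by
  obtain ⟨u, v, l, r, hr, rfl, rfl⟩ := h
  exact ⟨x ++ u, v, l, r, hr, by simp [List.append_assoc], by simp [List.append_assoc]⟩

theorem eqv_lift {α : Type*} {r s : α → α → Prop} (f : α → α)
    (hf : ∀ a b, r a b → s (f a) (f b)) :
    ∀ {a b}, Relation.EqvGen r a b → Relation.EqvGen s (f a) (f b) := by
  intro a b h
  induction h with
  | rel a b hab => exact Relation.EqvGen.rel _ _ (hf _ _ hab)
  | refl a => exact Relation.EqvGen.refl _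
  | symm a b _ ih => exact Relation.EqvGen.symm _ _ ih
  | trans a b c _ _ ih1 ih2 => exact Relation.EqvGen.trans _ _ _ ih1 ih2

theorem eqv_append {m n : ℕ} {x x' y y' : List (Fin 2)}
    (hx : Relation.EqvGen (RewriteStep m n) x x')
    (hy : Relation.EqvGen (RewriteStep m n) y y') :
    Relation.EqvGen (RewriteStep m n) (x ++ y) (x' ++ y') := by
  have h1 : Relation.EqvGen (RewriteStep m n) (x ++ y) (x' ++ y) :=
    eqv_lift (· ++ y) (fun a b hab => step_append_right y hab) hx
  have h2 : Relation.EqvGen (RewriteStep m n) (x' ++ y) (x' ++ y') :=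
    eqv_lift (x' ++ ·) (fun a b hab => step_append_left x' hab) hy
  exact Relation.EqvGen.trans _ _ _ h1 h2

/-- the generating relation of the presentation -/
def baseRel (m n : ℕ) : FreeMonoid (Fin 2) → FreeMonoid (Fin 2) → Prop := fun p q =>
  p = FreeMonoid.ofList (lhs₀ m n) ∧ q = FreeMonoid.ofList aw

theorem con_ctx {m n : ℕ} (x y : List (Fin 2)) {p q : List (Fin 2)}
    (h : ConGen.Rel (baseRel m n) (FreeMonoid.ofList p) (FreeMonoid.ofList q)) :
    ConGen.Rel (baseRel m n) (FreeMonoid.ofList (x ++ p ++ y))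
      (FreeMonoid.ofList (x ++ q ++ y)) := by
  rw [FreeMonoid.ofList_append, FreeMonoid.ofList_append,
    FreeMonoid.ofList_append, FreeMonoid.ofList_append]
  exact ConGen.Rel.mul (ConGen.Rel.mul (ConGen.Rel.refl _) h) (ConGen.Rel.refl _)

theorem con_base (m n : ℕ) :
    ConGen.Rel (baseRel m n) (FreeMonoid.ofList (lhs₀ m n)) (FreeMonoid.ofList aw) :=
  ConGen.Rel.of _ _ ⟨rfl, rfl⟩

theorem con_lhsi {m n : ℕ} (hn : 1 ≤ n) (i : ℕ) :
    ConGen.Rel (baseRel m n) (FreeMonoid.ofList (lhsᵢ m n i))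
      (FreeMonoid.ofList (rhsᵢ m n i)) := by
  obtain ⟨n', rfl⟩ : ∃ n', n = n' + 1 := ⟨n - 1, by omega⟩
  set N := n' + 1 with hN
  set d := m - i with hd
  set X := Rb N m ++ Qb N d ++ Ab N with hX
  set Z := Ab n' ++ (Rb N d ++ (Qb N m ++ [0])) with hZ
  have eq1 : lhsᵢ m N i = X ++ [0] := by
    rw [lhsi_eq, rep_eq_Ab, hX]
    simp [List.append_assoc]; rfl
  have eq2 : X ++ lhs₀ m N = lhs₀ m N ++ Z := by
    rw [hX, hZ, lhs₀_eq]
    simp only [List.cons_append, List.nil_append, List.append_assoc]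
    rw [← QA', QQ', QA']
    rfl
  have eq3 : ([0] : List (Fin 2)) ++ Z = rhsᵢ m N i := by
    rw [hZ, rhsi_eq, ← hd]
    simp only [List.cons_append, List.nil_append, List.append_assoc]
    rw [ZAc]
  have A : ConGen.Rel (baseRel m N) (FreeMonoid.ofList (X ++ [0]))
      (FreeMonoid.ofList (X ++ lhs₀ m N)) := by
    rw [FreeMonoid.ofList_append, FreeMonoid.ofList_append]
    exact ConGen.Rel.mul (ConGen.Rel.refl _)
      (ConGen.Rel.symm (by rw [← aw_eq]; exact con_base m N))
  have C : ConGen.Rel (baseRel m N) (FreeMonoid.ofList (lhs₀ m N ++ Z))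
      (FreeMonoid.ofList ([0] ++ Z)) := by
    rw [FreeMonoid.ofList_append, FreeMonoid.ofList_append]
    exact ConGen.Rel.mul (by rw [← aw_eq]; exact con_base m N) (ConGen.Rel.refl _)
  rw [eq1, ← eq3]
  exact ConGen.Rel.trans A (by rw [eq2]; exact C)

theorem con_of_rule {m n : ℕ} (hn : 1 ≤ n) {l r : List (Fin 2)}
    (h : RewriteRule m n l r) :
    ConGen.Rel (baseRel m n) (FreeMonoid.ofList l) (FreeMonoid.ofList r) := by
  rcases h with ⟨rfl, rfl⟩ | ⟨i, -, -, rfl, rfl⟩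
  · exact con_base m n
  · exact con_lhsi hn i

theorem eqv_to_con {m n : ℕ} (hn : 1 ≤ n) {x y : List (Fin 2)}
    (h : Relation.EqvGen (RewriteStep m n) x y) :
    ConGen.Rel (baseRel m n) (FreeMonoid.ofList x) (FreeMonoid.ofList y) := by
  induction h with
  | rel a b hab =>
    obtain ⟨u, v, l, r, hr, rfl, rfl⟩ := hab
    exact con_ctx u v (con_of_rule hn hr)
  | refl a => exact ConGen.Rel.refl _
  | symm a b _ ih => exact ConGen.Rel.symm ih
  | trans a b c _ _ ih1 ih2 => exact ConGen.Rel.trans ih1 ih2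

theorem con_to_eqv {m n : ℕ} {p q : FreeMonoid (Fin 2)}
    (h : ConGen.Rel (baseRel m n) p q) :
    Relation.EqvGen (RewriteStep m n) (FreeMonoid.toList p) (FreeMonoid.toList q) := by
  induction h with
  | of p q hpq =>
    obtain ⟨rfl, rfl⟩ := hpq
    refine Relation.EqvGen.rel _ _ ⟨[], [], lhs₀ m n, aw, Or.inl ⟨rfl, rfl⟩, ?_, ?_⟩ <;> simp
  | refl p => exact Relation.EqvGen.refl _
  | symm _ ih => exact Relation.EqvGen.symm _ _ ih
  | trans _ _ ih1 ih2 => exact Relation.EqvGen.trans _ _ _ ih1 ih2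
  | mul _ _ ih1 ih2 => exact eqv_append ih1 ih2
-- ### Newman and the final assembly
theorem local_conf {m n : ℕ} (hm : 1 ≤ m) (hn : 1 ≤ n) {w w₁ w₂ : List (Fin 2)}
    (h1 : RewriteStep m n w w₁) (h2 : RewriteStep m n w w₂) :
    ∃ z, Relation.ReflTransGen (RewriteStep m n) w₁ z ∧
      Relation.ReflTransGen (RewriteStep m n) w₂ z := by
  obtain ⟨u₁, v₁, l₁, r₁, hr1, hx1, hy1⟩ := h1
  obtain ⟨u₂, v₂, l₂, r₂, hr2, hx2, hy2⟩ := h2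
  rcases le_total u₁.length u₂.length with hle | hle
  · have heq : u₁ ++ (l₁ ++ v₁) = u₂ ++ (l₂ ++ v₂) := by
      rw [← List.append_assoc, ← hx1, hx2, List.append_assoc]
    obtain ⟨z, hz1, hz2⟩ := locAux hm hn hr1 hr2 heq hle
    exact ⟨z, by rwa [hy1, List.append_assoc], by rwa [hy2, List.append_assoc]⟩
  · have heq : u₂ ++ (l₂ ++ v₂) = u₁ ++ (l₁ ++ v₁) := by
      rw [← List.append_assoc, ← hx2, hx1, List.append_assoc]
    obtain ⟨z, hz2, hz1⟩ := locAux hm hn hr2 hr1 heq hle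
    exact ⟨z, by rwa [hy1, List.append_assoc], by rwa [hy2, List.append_assoc]⟩

theorem newman {α : Type*} {R : α → α → Prop} (wf : WellFounded (fun x y => R y x))
    (lc : ∀ w w₁ w₂, R w w₁ → R w w₂ →
      ∃ z, Relation.ReflTransGen R w₁ z ∧ Relation.ReflTransGen R w₂ z) :
    ∀ w w₁ w₂, Relation.ReflTransGen R w w₁ → Relation.ReflTransGen R w w₂ →
      ∃ z, Relation.ReflTransGen R w₁ z ∧ Relation.ReflTransGen R w₂ z := by
  intro w
  induction w using WellFounded.induction wf with
  | _ w IH =>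
    intro w₁ w₂ h1 h2
    rcases Relation.ReflTransGen.cases_head h1 with rfl | ⟨x₁, hwx₁, hx₁⟩
    · exact ⟨w₂, h2, Relation.ReflTransGen.refl⟩
    rcases Relation.ReflTransGen.cases_head h2 with rfl | ⟨x₂, hwx₂, hx₂⟩
    · exact ⟨w₁, Relation.ReflTransGen.refl, h1⟩
    obtain ⟨y, hy₁, hy₂⟩ := lc w x₁ x₂ hwx₁ hwx₂
    obtain ⟨z₁, hz₁a, hz₁b⟩ := IH x₁ hwx₁ w₁ y hx₁ hy₁
    obtain ⟨z₂, hz₂a, hz₂b⟩ := IH x₂ hwx₂ w₂ z₁ hx₂ (hy₂.trans hz₁b)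
    exact ⟨z₂, hz₁a.trans hz₂b, hz₂a⟩

end Rmn

/-- For `m, n ≥ 1` the rewriting system with the rules
(i) `(b a^n)^m (a^n b)^m a → a` and
(ii) `(b a^n)^m (a^n b)^{m−i} a^{n+1} → (a^n b)^{m−i} a^n (a^n b)^m a` (`1 ≤ i ≤ m`)
(a) presents the monoid `R_{m,n} = Mon⟨a, b | (b a^n)^m (a^n b)^m a = a⟩`,
(b) is terminating, and (c) is confluent. -/
theorem rmn_rewriting_system_complete (m n : ℕ) (hm : 1 ≤ m) (hn : 1 ≤ n) :
    (∀ x y : List (Fin 2),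
      Relation.EqvGen (RewriteStep m n) x y ↔
        conGen (fun p q : FreeMonoid (Fin 2) =>
            p = FreeMonoid.ofList (lhs₀ m n) ∧ q = FreeMonoid.ofList aw)
          (FreeMonoid.ofList x) (FreeMonoid.ofList y)) ∧
    WellFounded (fun x y : List (Fin 2) => RewriteStep m n y x) ∧
    (∀ w w₁ w₂ : List (Fin 2),
      Relation.ReflTransGen (RewriteStep m n) w w₁ →
      Relation.ReflTransGen (RewriteStep m n) w w₂ →
      ∃ w₃ : List (Fin 2),
        Relation.ReflTransGen (RewriteStep m n) w₁ w₃ ∧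
        Relation.ReflTransGen (RewriteStep m n) w₂ w₃) := by
  refine ⟨fun x y => ⟨fun h => Rmn.eqv_to_con hn h, fun h => ?_⟩,
    Rmn.rmn_terminating m n hm hn,
    Rmn.newman (Rmn.rmn_terminating m n hm hn) (fun w w₁ w₂ h1 h2 => Rmn.local_conf hm hn h1 h2)⟩
  have h' : Relation.EqvGen (RewriteStep m n)
      (FreeMonoid.toList (FreeMonoid.ofList x)) (FreeMonoid.toList (FreeMonoid.ofList y)) :=
    Rmn.con_to_eqv h
  simpa using h'
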